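/- arXiv:1410.7693 — 2 statements merged into one kernel-verified Lean document; each statement's English description precedes it below -/
import Mathlib

section
/- Translating a tiling of a region by a vector b ∈ Z^3 does not change its u-pretwist: if t is a tiling of a region R and f(p) = p + b with b ∈ Z^3, then T^u(f(t)) = T^u(t) for every u ∈ Φ. -/
open scoped BigOperators
noncomputable section

/-- Points of `ℝ³`. -/
abbrev R3 := Fin 3 → ℝ

/-- Euclidean inner product on `ℝ³`. -/
def dot (x y : R3) : ℝ := ∑ i, x i * y i

/-- Determinant of the 3×3 matrix with rows `a`, `b`, `c`. -/
def det3 (a b c : R3) : ℝ := Matrix.det (Matrix.of ![a, b, c])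

/-- The canonical basis vectors of `ℝ³`. -/
def stdR (i : Fin 3) : R3 := fun j => if j = i then 1 else 0

/-- `Φ`, the set of signed canonical basis vectors. -/
def PhiR : Set R3 := {u | ∃ i : Fin 3, u = stdR i ∨ u = -stdR i}

/-- A positively oriented basis with vectors in `Φ`. -/
def IsLatticeBasis (b1 b2 b3 : R3) : Prop :=
  b1 ∈ PhiR ∧ b2 ∈ PhiR ∧ b3 ∈ PhiR ∧ det3 b1 b2 b3 = 1

/-- The basic (closed unit) cube with least corner `q ∈ ℤ³`. -/
def cubeSet (q : Fin 3 → ℤ) : Set R3 := {x | ∀ i, (q i : ℝ) ≤ x i ∧ x i ≤ q i + 1}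

/-- The center of the basic cube with corner `q`. -/
def cubeCenter (q : Fin 3 → ℤ) : R3 := fun i => (q i : ℝ) + 1/2

/-- A basic cube is black when the coordinate sum of its corner is odd. -/
def cubeBlack (q : Fin 3 → ℤ) : Prop := Odd (q 0 + q 1 + q 2)

instance : DecidablePred cubeBlack := fun q => by unfold cubeBlack; infer_instance

/-- Color of a basic cube: `1` for black, `-1` for white. -/
def col (q : Fin 3 → ℤ) : ℤ := if cubeBlack q then 1 else -1

/-- A region, given as a finite set of basic cubes (identified by corners),
realized as a subset of `ℝ³`. -/
def regionSet (R : Finset (Fin 3 → ℤ)) : Set R3 := ⋃ q ∈ R, cubeSet q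

/-- A domino brick: two basic cubes sharing a face. -/
structure Domino where
  c1 : Fin 3 → ℤ
  c2 : Fin 3 → ℤ
  adj : (∑ i, |c1 i - c2 i|) = 1

instance : DecidableEq Domino := fun d e =>
  decidable_of_iff (d.c1 = e.c1 ∧ d.c2 = e.c2) (by cases d; cases e; simp)

/-- The two cubes of a domino. -/
def Domino.cubes (d : Domino) : Finset (Fin 3 → ℤ) := {d.c1, d.c2}

/-- The domino as a subset of `ℝ³`. -/
def Domino.toSet (d : Domino) : Set R3 := cubeSet d.c1 ∪ cubeSet d.c2

/-- `v(d)`: the center of the black cube minus the center of the white cube. -/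
def Domino.v (d : Domino) : R3 :=
  if cubeBlack d.c1 then (fun i => (d.c1 i : ℝ) - d.c2 i) else (fun i => (d.c2 i : ℝ) - d.c1 i)

/-- Two dominoes are the same up to the (irrelevant) ordering of their cubes. -/
def Domino.same (d e : Domino) : Prop :=
  (d.c1 = e.c1 ∧ d.c2 = e.c2) ∨ (d.c1 = e.c2 ∧ d.c2 = e.c1)

/-- The open `u`-shade of a set `X ⊆ ℝ³`. -/
def shade (u : R3) (X : Set R3) : Set R3 :=
  interior ({y | ∃ x ∈ X, ∃ s : ℝ, 0 ≤ s ∧ y = x + s • u} \ X)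

/-- The effect of the domino `d0` on the domino `d1` along `u`. -/
def tau (u : R3) (d0 d1 : Domino) : ℝ :=
  open scoped Classical in
  if (d1.toSet ∩ shade u d0.toSet).Nonempty then (1/4) * det3 d1.v d0.v u else 0

/-- The `u`-pretwist of a (finite set of) dominoes. -/
def T (u : R3) (t : Finset Domino) : ℝ := ∑ d0 ∈ t, ∑ d1 ∈ t, tau u d0 d1

/-- `t` is a tiling of the region `R`: every domino lies in `R` and every cube
of `R` is covered by exactly one domino of `t`. -/
def IsTiling (R : Finset (Fin 3 → ℤ)) (t : Finset Domino) : Prop :=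
  (∀ d ∈ t, d.c1 ∈ R ∧ d.c2 ∈ R) ∧
  ∀ q ∈ R, ∃! d, d ∈ t ∧ (q = d.c1 ∨ q = d.c2)

/-- Translation of a domino by an integer vector. -/
def Domino.translate (d : Domino) (b : Fin 3 → ℤ) : Domino :=
  ⟨fun i => d.c1 i + b i, fun i => d.c2 i + b i, by
    have h : ∀ i : Fin 3, |d.c1 i + b i - (d.c2 i + b i)| = |d.c1 i - d.c2 i| := by
      intro i; ring_nf
    rw [Finset.sum_congr rfl fun i _ => h i]; exact d.adj⟩

/-- Reflection of a cube in the hyperplane `x_k = 0`. -/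
def reflCube (k : Fin 3) (q : Fin 3 → ℤ) : Fin 3 → ℤ :=
  fun i => if i = k then -q i - 1 else q i

/-- Reflection of a domino in the hyperplane `x_k = 0`. -/
def Domino.reflect (d : Domino) (k : Fin 3) : Domino :=
  ⟨reflCube k d.c1, reflCube k d.c2, by
    have h : ∀ i : Fin 3, |reflCube k d.c1 i - reflCube k d.c2 i| = |d.c1 i - d.c2 i| := by
      intro i
      by_cases hik : i = k
      · simp only [reflCube, if_pos hik]
        have h2 : -d.c1 i - 1 - (-d.c2 i - 1) = -(d.c1 i - d.c2 i) := by ring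
        rw [h2, abs_neg]
      · simp [reflCube, hik]
    rw [Finset.sum_congr rfl fun i _ => h i]; exact d.adj⟩

/-- A signed-permutation rotation applied to a basic cube (acting on centers by
`y i = ε i * x (σ i)` and recording the new least corner). -/
def rotCube (σ : Equiv.Perm (Fin 3)) (ε : Fin 3 → ℤ) (q : Fin 3 → ℤ) : Fin 3 → ℤ :=
  fun i => if ε i = 1 then q (σ i) else -q (σ i) - 1

/-- A signed-permutation rotation applied to a domino. -/
def Domino.rot (d : Domino) (σ : Equiv.Perm (Fin 3)) (ε : Fin 3 → ℤ) : Domino :=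
  ⟨rotCube σ ε d.c1, rotCube σ ε d.c2, by
    have h : ∀ i : Fin 3, |rotCube σ ε d.c1 i - rotCube σ ε d.c2 i|
        = |d.c1 (σ i) - d.c2 (σ i)| := by
      intro i
      by_cases hi : ε i = 1
      · simp [rotCube, hi]
      · simp only [rotCube, if_neg hi]
        have h2 : -d.c1 (σ i) - 1 - (-d.c2 (σ i) - 1) = -(d.c1 (σ i) - d.c2 (σ i)) := by ring
        rw [h2, abs_neg]
    rw [Finset.sum_congr rfl fun i _ => h i]
    rw [Equiv.sum_comp σ (fun j => |d.c1 j - d.c2 j|)]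
    exact d.adj⟩

/-- Auxiliary constructor for dominoes. -/
def mkDom (p q : Fin 3 → ℤ) (h : (∑ i, |p i - q i|) = 1) : Domino := ⟨p, q, h⟩

/-- The three dominoes removed by the canonical positive trit. -/
def tritPre : Fin 3 → Domino
  | 0 => mkDom ![0,0,0] ![0,0,1] (by decide)
  | 1 => mkDom ![0,1,1] ![1,1,1] (by decide)
  | 2 => mkDom ![1,0,0] ![1,1,0] (by decide)

/-- The three dominoes placed back by the canonical positive trit. -/
def tritPost : Fin 3 → Domino
  | 0 => mkDom ![0,0,0] ![1,0,0] (by decide)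
  | 1 => mkDom ![0,0,1] ![0,1,1] (by decide)
  | 2 => mkDom ![1,1,0] ![1,1,1] (by decide)

/-- `t1` is obtained from `t0` by a flip: two dominoes of `t0` occupying a
`2×2×1` slab are replaced by the two other dominoes filling the same slab. -/
def IsFlip (t0 t1 : Finset Domino) : Prop :=
  ∃ d0 d0' d1 d1' : Domino, d0 ∈ t0 ∧ d0' ∈ t0 ∧ d0 ≠ d0' ∧
    d1 ∈ t1 ∧ d1' ∈ t1 ∧ d1 ≠ d1' ∧
    t0 \ {d0, d0'} = t1 \ {d1, d1'} ∧
    ({d0, d0'} : Finset Domino) ≠ {d1, d1'} ∧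
    d0.cubes ∪ d0'.cubes = d1.cubes ∪ d1'.cubes

/-- `t1` is obtained from `t0` by a positive trit: up to an orientation preserving
lattice isometry, three dominoes of `t0` in the canonical pre-trit position are
replaced by the three dominoes in the canonical post-trit position. -/
def IsPositiveTrit (t0 t1 : Finset Domino) : Prop :=
  ∃ (σ : Equiv.Perm (Fin 3)) (ε : Fin 3 → ℤ) (b : Fin 3 → ℤ),
    (∀ i, ε i = 1 ∨ ε i = -1) ∧
    ((∏ i, ε i) : ℤ) * (Equiv.Perm.sign σ : ℤ) = 1 ∧
    ∃ a : Fin 3 → Domino, ∃ a' : Fin 3 → Domino,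
      (∀ j, a j ∈ t0) ∧ (∀ j, a' j ∈ t1) ∧
      (∀ j, (a j).same (((tritPre j).rot σ ε).translate b)) ∧
      (∀ j, (a' j).same (((tritPost j).rot σ ε).translate b)) ∧
      t0 \ {a 0, a 1, a 2} = t1 \ {a' 0, a' 1, a' 2}

/-- A cube `q` lies in the closed shade, in the direction `±e_k` (sign `sgn`),
of the 2×2 square with normal `e_k` and corner `p` (at height `p k`). -/
def inShade (k : Fin 3) (sgn : Bool) (p q : Fin 3 → ℤ) : Prop :=
  (∀ j, j ≠ k → q j = p j ∨ q j = p j + 1) ∧ (if sgn then p k ≤ q k else q k < p k)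

instance (k : Fin 3) (sgn : Bool) (p q : Fin 3 → ℤ) : Decidable (inShade k sgn p q) := by
  unfold inShade; infer_instance

/-- The 2×2 square with normal `e_k`, corner `p`, at height `p k`
is contained in the region `R`. -/
def squareInRegion (R : Finset (Fin 3 → ℤ)) (k : Fin 3) (p : Fin 3 → ℤ) : Prop :=
  ∀ q : Fin 3 → ℤ, (∀ j, j ≠ k → q j = p j ∨ q j = p j + 1) → q k = p k →
    q ∈ R ∨ Function.update q k (p k - 1) ∈ R

/-- `R` is fully balanced with respect to the directions `±e_k`. -/
def FullyBalancedWrt (R : Finset (Fin 3 → ℤ)) (k : Fin 3) : Prop :=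
  ∀ p : Fin 3 → ℤ, squareInRegion R k p →
    (∑ q ∈ R, if inShade k true p q then col q else 0) = 0 ∧
    (∑ q ∈ R, if inShade k false p q then col q else 0) = 0

/-- `R` is a pseudocylinder with axis `e_k` and depth `n`: a planar region with
connected interior, thickened `n` layers in the direction `e_k`. -/
def IsPseudocylinder (R : Finset (Fin 3 → ℤ)) (k : Fin 3) (n : ℕ) : Prop :=
  0 < n ∧
  (∀ q ∈ R, 0 ≤ q k ∧ q k < n) ∧
  (∀ q ∈ R, ∀ m : ℤ, 0 ≤ m → m < n → Function.update q k m ∈ R) ∧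
  R.Nonempty ∧
  IsConnected (interior (regionSet (R.filter (fun q => q k = 0))))

/-- A cylinder: a pseudocylinder whose base is simply connected. -/
def IsCylinder (R : Finset (Fin 3 → ℤ)) (k : Fin 3) (n : ℕ) : Prop :=
  IsPseudocylinder R k n ∧
  SimplyConnectedSpace (interior (regionSet (R.filter (fun q => q k = 0))))

/-- A (lattice) segment: the unit straight path between the centers of two
face-adjacent basic cubes, from the center of the cube `a` to that of `b`. -/
structure Seg where
  a : Fin 3 → ℤ
  b : Fin 3 → ℤ
  adj : (∑ i, |a i - b i|) = 1

/-- The point of a segment at parameter `x ∈ [0,1]`. -/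
def Seg.pt (s : Seg) (x : ℝ) : R3 := fun i => (cubeCenter s.a i) + x * ((s.b i : ℝ) - s.a i)

/-- The direction `v(ℓ) = ℓ(1) - ℓ(0)` of a segment. -/
def Seg.vec (s : Seg) : R3 := fun i => (s.b i : ℝ) - s.a i

/-- A segment lies in a region if both its cubes do. -/
def Seg.inRegion (s : Seg) (R : Finset (Fin 3 → ℤ)) : Prop := s.a ∈ R ∧ s.b ∈ R

/-- A straight segment in `ℝ³`, with base point `p` and direction `v`. -/
structure RSeg where
  p : R3
  v : R3

/-- The point of an `RSeg` at parameter `x ∈ [0,1]`. -/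
def RSeg.pt (l : RSeg) (x : ℝ) : R3 := fun i => l.p i + x * l.v i

/-- Orientation reversal of an `RSeg`. -/
def RSeg.reverse (l : RSeg) : RSeg := ⟨fun i => l.p i + l.v i, fun i => -l.v i⟩

/-- Translation of an `RSeg`. -/
def RSeg.translate (l : RSeg) (u : R3) : RSeg := ⟨fun i => l.p i + u i, l.v⟩

/-- The `RSeg` underlying a lattice segment. -/
def Seg.toR (s : Seg) : RSeg := ⟨cubeCenter s.a, s.vec⟩

/-- The dimer of a domino: the segment from the white center to the black center. -/
def Domino.dimer (d : Domino) : RSeg :=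
  if cubeBlack d.c1 then ⟨cubeCenter d.c2, d.v⟩ else ⟨cubeCenter d.c1, d.v⟩

/-- The orthogonal projection onto the plane `u^⊥`. -/
def projO (u : R3) (x : R3) : R3 := fun i => x i - (dot x u) * u i

/-- The (slanted) projection onto `b3^⊥` with kernel spanned by `b3 + a·b1 + b·b2`. -/
def projSl (b1 b2 b3 : R3) (a b : ℝ) (x : R3) : R3 :=
  fun i => x i - (dot x b3) * (b3 i + a * b1 i + b * b2 i)

/-- The effect of segment `l0` on segment `l1` along `u` (orthogonal version). -/
def tauR (u : R3) (l0 l1 : RSeg) : ℝ :=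
  open scoped Classical in
  if ((∃ x0 ∈ Set.Icc (0:ℝ) 1, ∃ x1 ∈ Set.Icc (0:ℝ) 1,
        projO u (l0.pt x0) = projO u (l1.pt x1)) ∧ dot (l0.pt 0) u < dot (l1.pt 0) u)
  then (1/4) * det3 l1.v l0.v u else 0

/-- The slanted effect `τ^β_{a,b}(l0,l1)`. -/
def tauSl (b1 b2 b3 : R3) (a b : ℝ) (l0 l1 : RSeg) : ℝ :=
  open scoped Classical in
  if ((∃ x0 ∈ Set.Icc (0:ℝ) 1, ∃ x1 ∈ Set.Icc (0:ℝ) 1,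
        projSl b1 b2 b3 a b (l0.pt x0) = projSl b1 b2 b3 a b (l1.pt x1))
      ∧ dot (l0.pt 0) b3 < dot (l1.pt 0) b3)
  then det3 l1.v l0.v b3 else 0

/-- `T^u(A,B)` summed over two finite families of segments. -/
def Tfam {n m : ℕ} (u : R3) (A : Fin n → RSeg) (B : Fin m → RSeg) : ℝ :=
  ∑ k, ∑ l, tauR u (A k) (B l)

/-- The combinatorial linking number (along `u`) of two disjoint closed curves:
half the symmetrized sum of effects. -/
def LinkAlong {n m : ℕ} (u : R3) (A : Fin n → RSeg) (B : Fin m → RSeg) : ℝ :=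
  (Tfam u A B + Tfam u B A) / 2

/-- The `u`-pretwist of a tiling, computed via dimers. -/
def Tdim (u : R3) (t : Finset Domino) : ℝ := ∑ d0 ∈ t, ∑ d1 ∈ t, tauR u d0.dimer d1.dimer

/-- A closed curve given by a cyclic list of segments. -/
def IsClosedCurve {n : ℕ} (γ : Fin n → RSeg) : Prop :=
  2 ≤ n ∧ ∀ k : Fin n,
    (γ k).pt 1 = (γ ⟨(k.val + 1) % n, Nat.mod_lt _ k.pos⟩).pt 0

/-- A closed curve is simple when its vertices are pairwise distinct. -/
def IsSimpleCurve {n : ℕ} (γ : Fin n → RSeg) : Prop :=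
  Function.Injective (fun k : Fin n => (γ k).pt 0)

/-- The (cyclically) next segment of a curve. -/
def nextSeg {n : ℕ} (hn : 0 < n) (γ : Fin n → RSeg) (k : Fin n) : RSeg :=
  γ ⟨(k.val + 1) % n, Nat.mod_lt _ hn⟩

/-- Adjacency of basic cubes. -/
def cubeAdj (p q : Fin 3 → ℤ) : Prop := (∑ i, |p i - q i|) = 1

/-- The associated graph of a region: vertices are cubes, edges join
face-adjacent cubes. -/
def cubeGraph (R : Finset (Fin 3 → ℤ)) : SimpleGraph {q // q ∈ R} where
  Adj p q := cubeAdj p.val q.val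
  symm := by
    constructor
    intro p q h
    beta_reduce at h ⊢
    unfold cubeAdj at h ⊢
    rw [Finset.sum_congr rfl fun i _ => abs_sub_comm (q.val i) (p.val i)]
    exact h
  loopless := by constructor; intro p h; simp [cubeAdj] at h

/-- The prism `G × I_m` over a graph `G`: the product of `G` with a path. -/
def prism {V : Type*} (G : SimpleGraph V) (m : ℕ) : SimpleGraph (V × Fin m) where
  Adj a b := (a.1 = b.1 ∧ (a.2.val + 1 = b.2.val ∨ b.2.val + 1 = a.2.val))
    ∨ (G.Adj a.1 b.1 ∧ a.2 = b.2)
  symm := by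
    constructor
    intro a b h
    rcases h with ⟨h1, h2⟩ | ⟨h1, h2⟩
    · exact Or.inl ⟨h1.symm, h2.symm⟩
    · exact Or.inr ⟨h1.symm, h2.symm⟩
  loopless := by
    constructor
    intro a h
    rcases h with ⟨-, h2⟩ | ⟨h1, -⟩
    · omega
    · exact G.irrefl h1

/-- The turning indicator `η` of a curve at position `k`. -/
def eta {n : ℕ} (b2 b3 : R3) (γ : Fin n → RSeg) (k : Fin n) : ℝ :=
  open scoped Classical in
  if ((γ k).v = b2 ∧ (nextSeg k.pos γ k).v = b3)
      ∨ ((γ k).v = -b3 ∧ (nextSeg k.pos γ k).v = -b2) then 1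
  else if ((γ k).v = -b2 ∧ (nextSeg k.pos γ k).v = -b3)
      ∨ ((γ k).v = b3 ∧ (nextSeg k.pos γ k).v = b2) then -1
  else 0

/-- A box: a rectangular parallelepiped of basic cubes. -/
def IsBox (B : Finset (Fin 3 → ℤ)) : Prop :=
  ∃ lo hi : Fin 3 → ℤ, (∀ i, lo i < hi i) ∧ ∀ q, q ∈ B ↔ ∀ i, lo i ≤ q i ∧ q i < hi i
lemma translate_inj (b : Fin 3 → ℤ) : Function.Injective (fun d : Domino => d.translate b) := by
  rintro ⟨p, q, hpq⟩ ⟨p', q', hpq'⟩ h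
  simp only [Domino.translate, Domino.mk.injEq] at h ⊢
  obtain ⟨h1, h2⟩ := h
  refine ⟨funext fun i => ?_, funext fun i => ?_⟩
  · have := congrFun h1 i; omega
  · have := congrFun h2 i; omega

lemma det3_neg_neg (a c u : R3) : det3 (-a) (-c) u = det3 a c u := by
  simp [det3, Matrix.det_fin_three]

lemma cubeBlack_translate (q b : Fin 3 → ℤ) :
    cubeBlack (fun i => q i + b i) ↔ (cubeBlack q ↔ ¬ Odd (b 0 + b 1 + b 2)) := by
  unfold cubeBlack
  simp only [Int.odd_iff]
  omega

lemma v_translate (d : Domino) (b : Fin 3 → ℤ) :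
    (d.translate b).v = if Odd (b 0 + b 1 + b 2) then -d.v else d.v := by
  unfold Domino.v Domino.translate
  by_cases hb : Odd (b 0 + b 1 + b 2) <;> by_cases h1 : cubeBlack d.c1 <;>
      simp only [hb, h1, cubeBlack_translate, if_true, if_false, iff_true, iff_false,
        not_not, if_pos, if_neg, not_true, not_false_iff] <;>
    · funext i; push_cast [Pi.neg_apply]; ring

lemma det3_v_translate (d0 d1 : Domino) (b : Fin 3 → ℤ) (u : R3) :
    det3 (d1.translate b).v (d0.translate b).v u = det3 d1.v d0.v u := by
  rw [v_translate, v_translate]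
  by_cases hb : Odd (b 0 + b 1 + b 2)
  · rw [if_pos hb, if_pos hb, det3_neg_neg]
  · rw [if_neg hb, if_neg hb]

lemma image_ray (v u : R3) (X : Set R3) :
    {y | ∃ x ∈ (fun z => z + v) '' X, ∃ s : ℝ, 0 ≤ s ∧ y = x + s • u}
      = (fun z => z + v) '' {y | ∃ x ∈ X, ∃ s : ℝ, 0 ≤ s ∧ y = x + s • u} := by
  ext y
  simp only [Set.mem_setOf_eq, Set.mem_image]
  constructor
  · rintro ⟨x, ⟨x', hx', rfl⟩, s, hs, rfl⟩
    exact ⟨x' + s • u, ⟨x', hx', s, hs, rfl⟩, by abel⟩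
  · rintro ⟨y', ⟨x, hx, s, hs, rfl⟩, rfl⟩
    exact ⟨x + v, ⟨x, hx, rfl⟩, s, hs, by abel⟩

lemma shade_translate (u v : R3) (X : Set R3) :
    shade u ((fun z => z + v) '' X) = (fun z => z + v) '' shade u X := by
  unfold shade
  rw [image_ray, ← Set.image_diff (add_left_injective v)]
  have := (Homeomorph.addRight v).image_interior
      ({y | ∃ x ∈ X, ∃ s : ℝ, 0 ≤ s ∧ y = x + s • u} \ X)
  simpa using this.symm

lemma cubeSet_translate (q b : Fin 3 → ℤ) :
    cubeSet (fun i => q i + b i)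
      = (fun z : R3 => z + (fun i => (b i : ℝ))) '' cubeSet q := by
  ext x
  simp only [cubeSet, Set.mem_image, Set.mem_setOf_eq]
  constructor
  · intro h
    refine ⟨fun i => x i - b i, fun i => ?_, ?_⟩
    · have := h i; push_cast at this ⊢
      constructor <;> [linarith [this.1]; linarith [this.2]]
    · funext i; simp
  · rintro ⟨y, hy, rfl⟩ i
    have := hy i
    push_cast
    simp only [Pi.add_apply]
    constructor <;> [linarith [this.1]; linarith [this.2]]

lemma toSet_translate (d : Domino) (b : Fin 3 → ℤ) :
    (d.translate b).toSet = (fun z : R3 => z + (fun i => (b i : ℝ))) '' d.toSet := by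
  unfold Domino.toSet Domino.translate
  rw [Set.image_union, cubeSet_translate, cubeSet_translate]

lemma tau_translate (u : R3) (d0 d1 : Domino) (b : Fin 3 → ℤ) :
    tau u (d0.translate b) (d1.translate b) = tau u d0 d1 := by
  classical
  unfold tau
  have hcond : ((d1.translate b).toSet ∩ shade u (d0.translate b).toSet).Nonempty
      ↔ (d1.toSet ∩ shade u d0.toSet).Nonempty := by
    rw [toSet_translate, toSet_translate, shade_translate,
      ← Set.image_inter (add_left_injective _), Set.image_nonempty]
  by_cases h : (d1.toSet ∩ shade u d0.toSet).Nonempty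
  · rw [if_pos (hcond.mpr h), if_pos h, det3_v_translate]
  · rw [if_neg (fun hc => h (hcond.mp hc)), if_neg h]

theorem statement1 (R : Finset (Fin 3 → ℤ)) (t : Finset Domino) (ht : IsTiling R t)
    (b : Fin 3 → ℤ) (u : R3) (hu : u ∈ PhiR) :
    T u (t.image (fun d => d.translate b)) = T u t := by
  unfold T
  rw [Finset.sum_image (fun x _ y _ h => translate_inj b h)]
  refine Finset.sum_congr rfl fun d0 _ => ?_
  rw [Finset.sum_image (fun x _ y _ h => translate_inj b h)]
  exact Finset.sum_congr rfl fun d1 _ => tau_translate u d0 d1 b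
end
end

section
/- Let β = (β1,β2,β3) be a positively oriented basis of vectors from {±e1,±e2,±e3}, let R be a region of β3-length N, and 0 < |a|,|b| < 1/N. For two segments ℓ0, ℓ1 of R, the symmetrized slanted effect τ^β_{a,b}(ℓ0,ℓ1) + τ^β_{a,b}(ℓ1,ℓ0) is nonzero if and only if there exist s0,s1 ∈ [0,1] with ℓ0(s0) ≠ ℓ1(s1) and Π^β_{a,b}(ℓ0(s0)) = Π^β_{a,b}(ℓ1(s1)); moreover in that case the crossing is transversal with sign equal to τ^β_{a,b}(ℓ0,ℓ1) + τ^β_{a,b}(ℓ1,ℓ0). -/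
open scoped BigOperators
noncomputable section

/-! ### Auxiliary lemmas -/

lemma dot_expand (x y : R3) : dot x y = x 0 * y 0 + x 1 * y 1 + x 2 * y 2 := by
  simp [dot, Fin.sum_univ_three]

lemma det3_expand (u v w : R3) : det3 u v w =
    u 0 * (v 1 * w 2 - v 2 * w 1) - u 1 * (v 0 * w 2 - v 2 * w 0)
      + u 2 * (v 0 * w 1 - v 1 * w 0) := by
  simp [det3, Matrix.det_fin_three]; ring

lemma stdR_cover : ∀ i1 i2 i3 j : Fin 3, i1 ≠ i2 → i1 ≠ i3 → i2 ≠ i3 →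
    j = i1 ∨ j = i2 ∨ j = i3 := by decide

lemma stdR_dot (i j : Fin 3) : dot (stdR i) (stdR j) = if i = j then 1 else 0 := by
  fin_cases i <;> fin_cases j <;> norm_num [dot_expand, stdR, Fin.ext_iff]

lemma int_eq_zero_of_abs_lt (m : ℤ) (h : |(m : ℝ)| < 1) : m = 0 := by
  have h' : ((|m| : ℤ) : ℝ) < 1 := by rw [Int.cast_abs]; exact h
  have h2 : |m| < 1 := by exact_mod_cast h'
  rw [abs_lt] at h2; omega

lemma convex_bound (N A0 B0 A1 B1 s0 s1 : ℝ)
    (h1 : |A1 - A0| ≤ N) (h2 : |A1 - B0| ≤ N) (h3 : |B1 - A0| ≤ N) (h4 : |B1 - B0| ≤ N)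
    (hs0 : s0 ∈ Set.Icc (0:ℝ) 1) (hs1 : s1 ∈ Set.Icc (0:ℝ) 1) :
    |(A1 + s1 * (B1 - A1)) - (A0 + s0 * (B0 - A0))| ≤ N := by
  obtain ⟨h00, h01⟩ := hs0; obtain ⟨h10, h11⟩ := hs1
  rw [abs_le] at *
  constructor <;>
    nlinarith [mul_nonneg (sub_nonneg.2 h11) (sub_nonneg.2 h01),
      mul_nonneg (sub_nonneg.2 h11) h00, mul_nonneg h10 (sub_nonneg.2 h01),
      mul_nonneg h10 h00, h1.1, h1.2, h2.1, h2.2, h3.1, h3.2, h4.1, h4.2]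

/-- The kernel direction of the slanted projection. -/
def wvec (b1 b2 b3 : R3) (a b : ℝ) : R3 := fun j => b3 j + a * b1 j + b * b2 j

lemma proj_eq_iff (b1 b2 b3 : R3) (a b : ℝ) (x y : R3) :
    projSl b1 b2 b3 a b x = projSl b1 b2 b3 a b y ↔
      ∀ j, x j - y j = (dot x b3 - dot y b3) * wvec b1 b2 b3 a b j := by
  constructor
  · intro h j
    have h' := congrFun h j
    simp only [projSl] at h'
    simp only [wvec]
    linear_combination h'
  · intro h
    funext j
    simp only [projSl]
    have := h j
    simp only [wvec] at this
    linear_combination this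

lemma seg_pt_apply (l : Seg) (s : ℝ) (j : Fin 3) :
    l.pt s j = ((l.a j : ℝ) + 1/2) + s * ((l.b j : ℝ) - l.a j) := rfl

lemma toR_pt (l : Seg) (s : ℝ) : (Seg.toR l).pt s = l.pt s := rfl

lemma toR_v (l : Seg) : (Seg.toR l).v = l.vec := rfl

lemma dot_pt (l : Seg) (s : ℝ) (u : R3) :
    dot (l.pt s) u = dot (l.pt 0) u + s * dot l.vec u := by
  simp only [dot_expand, seg_pt_apply, Seg.vec]; ring
/-- The conclusion of the theorem, abstracted over the data. -/
def Concl (b1 b2 b3 : R3) (a b : ℝ) (l0 l1 : Seg) : Prop :=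
  (tauSl b1 b2 b3 a b l0.toR l1.toR + tauSl b1 b2 b3 a b l1.toR l0.toR ≠ 0 ↔
      ∃ s0 ∈ Set.Icc (0:ℝ) 1, ∃ s1 ∈ Set.Icc (0:ℝ) 1,
        l0.pt s0 ≠ l1.pt s1 ∧
        projSl b1 b2 b3 a b (l0.pt s0) = projSl b1 b2 b3 a b (l1.pt s1)) ∧
    (∀ s0 ∈ Set.Icc (0:ℝ) 1, ∀ s1 ∈ Set.Icc (0:ℝ) 1,
        l0.pt s0 ≠ l1.pt s1 →
        projSl b1 b2 b3 a b (l0.pt s0) = projSl b1 b2 b3 a b (l1.pt s1) →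
        det3 l1.vec l0.vec (l1.pt s1 - l0.pt s0) ≠ 0 ∧
        Real.sign (det3 l1.vec l0.vec (l1.pt s1 - l0.pt s0))
          = tauSl b1 b2 b3 a b l0.toR l1.toR + tauSl b1 b2 b3 a b l1.toR l0.toR)

/-- The degenerate cases: when the directions of the two segments do not span
the two horizontal axes, there is no crossing and both effects vanish. -/
lemma deg_case (b1 b2 b3 : R3) (a b α N : ℝ) (hN0 : 0 < N)
    (hα0 : α ≠ 0) (hαN : |α| * N < 1) (l0 l1 : Seg) (u : R3)
    (hu0 : dot l0.vec u = 0) (hu1 : dot l1.vec u = 0)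
    (hwu : dot (wvec b1 b2 b3 a b) u = α)
    (hint : ∃ m : ℤ, (m : ℝ) = dot (fun j => l1.pt 0 j - l0.pt 0 j) u)
    (hhN : ∀ s0 ∈ Set.Icc (0:ℝ) 1, ∀ s1 ∈ Set.Icc (0:ℝ) 1,
      |dot (l1.pt s1) b3 - dot (l0.pt s0) b3| ≤ N)
    (hdet0 : det3 l1.vec l0.vec b3 = 0) :
    Concl b1 b2 b3 a b l0 l1 := by
  have nocross : ∀ s0 ∈ Set.Icc (0:ℝ) 1, ∀ s1 ∈ Set.Icc (0:ℝ) 1,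
      projSl b1 b2 b3 a b (l0.pt s0) = projSl b1 b2 b3 a b (l1.pt s1) →
      l0.pt s0 = l1.pt s1 := by
    intro s0 hs0 s1 hs1 hPeq
    obtain ⟨m, hm⟩ := hint
    rw [proj_eq_iff] at hPeq
    set t := dot (l0.pt s0) b3 - dot (l1.pt s1) b3 with ht
    -- dot of the difference with u, computed two ways
    have e1 : (l0.pt s0 0 - l1.pt s1 0) * u 0 + (l0.pt s0 1 - l1.pt s1 1) * u 1
        + (l0.pt s0 2 - l1.pt s1 2) * u 2 = t * α := by
      rw [dot_expand] at hwu
      linear_combination u 0 * hPeq 0 + u 1 * hPeq 1 + u 2 * hPeq 2 + t * hwu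
    have e2 : (l0.pt s0 0 - l1.pt s1 0) * u 0 + (l0.pt s0 1 - l1.pt s1 1) * u 1
        + (l0.pt s0 2 - l1.pt s1 2) * u 2 = -(m : ℝ) := by
      rw [dot_expand] at hm hu0 hu1
      simp only [seg_pt_apply, Seg.vec] at hm hu0 hu1 ⊢
      linear_combination hm + s0 * hu0 - s1 * hu1
    have e3 : |t| ≤ N := by
      have := hhN s0 hs0 s1 hs1
      rwa [abs_sub_comm] at this
    have hm1 : |(m : ℝ)| < 1 := by
      have hmta : (m : ℝ) = -(t * α) := by linarith
      rw [hmta, abs_neg, abs_mul, mul_comm]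
      calc |α| * |t| ≤ |α| * N := mul_le_mul_of_nonneg_left e3 (abs_nonneg α)
        _ < 1 := hαN
    have hm0 : m = 0 := int_eq_zero_of_abs_lt m hm1
    have ht0 : t = 0 := by
      have : t * α = 0 := by rw [hm0] at e2; push_cast at e2; linarith
      rcases mul_eq_zero.1 this with h | h
      · exact h
      · exact absurd h hα0
    funext j
    have := hPeq j
    rw [ht0, zero_mul] at this
    linarith
  have tau0 : tauSl b1 b2 b3 a b l0.toR l1.toR = 0 := by
    rw [tauSl]
    split
    · exact hdet0
    · rfl
  have tau0' : tauSl b1 b2 b3 a b l1.toR l0.toR = 0 := by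
    rw [tauSl]
    split
    · show det3 l0.vec l1.vec b3 = 0
      rw [det3_expand] at hdet0 ⊢
      linarith
    · rfl
  refine ⟨?_, ?_⟩
  · rw [tau0, tau0']
    constructor
    · intro h; exact absurd (by norm_num) h
    · rintro ⟨s0, hs0, s1, hs1, hne, hPeq⟩
      exact absurd (nocross s0 hs0 s1 hs1 hPeq) hne
  · intro s0 hs0 s1 hs1 hne hPeq
    exact absurd (nocross s0 hs0 s1 hs1 hPeq) hne
lemma sign_mul_pm_pos (x c : ℝ) (hc : c = 1 ∨ c = -1) (hx : 0 < x) :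
    Real.sign (x * c) = c := by
  rcases hc with rfl | rfl
  · rw [mul_one]; exact Real.sign_of_pos hx
  · rw [mul_neg_one]; rw [Real.sign_of_neg (by linarith)]

lemma sign_mul_pm_neg (x c : ℝ) (hc : c = 1 ∨ c = -1) (hx : x < 0) :
    Real.sign (x * c) = -c := by
  rcases hc with rfl | rfl
  · rw [mul_one]; rw [Real.sign_of_neg hx]
  · rw [mul_neg_one]; rw [Real.sign_of_pos (by linarith)]; norm_num

/-- The main case: `l0` along `b1`, `l1` along `b2`. -/
lemma main_case (b1 b2 b3 : R3) (a b : ℝ)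
    (d13 : dot b1 b3 = 0) (d23 : dot b2 b3 = 0) (d33 : dot b3 b3 = 1)
    (hdet : det3 b1 b2 b3 = 1)
    (l0 l1 : Seg) (ε0 ε1 : ℝ) (hε0 : ε0 = 1 ∨ ε0 = -1) (hε1 : ε1 = 1 ∨ ε1 = -1)
    (hv0 : ∀ j, l0.vec j = ε0 * b1 j) (hv1 : ∀ j, l1.vec j = ε1 * b2 j) :
    Concl b1 b2 b3 a b l0 l1 := by
  have hv0u : dot l0.vec b3 = 0 := by
    rw [dot_expand] at d13 ⊢; rw [hv0 0, hv0 1, hv0 2]; linear_combination ε0 * d13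
  have hv1u : dot l1.vec b3 = 0 := by
    rw [dot_expand] at d23 ⊢; rw [hv1 0, hv1 1, hv1 2]; linear_combination ε1 * d23
  set H0 := dot (l0.pt 0) b3 with hH0
  set H1 := dot (l1.pt 0) b3 with hH1
  -- the value of the determinant against b3
  have hD : det3 l1.vec l0.vec b3 = -(ε0 * ε1) := by
    rw [det3_expand] at hdet ⊢
    simp only [hv0, hv1]
    linear_combination (-(ε0 * ε1)) * hdet
  have hD' : det3 l0.vec l1.vec b3 = ε0 * ε1 := by
    rw [det3_expand] at hdet ⊢
    simp only [hv0, hv1]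
    linear_combination (ε0 * ε1) * hdet
  -- the determinant against multiples of the kernel vector
  have hDw : ∀ t : ℝ, det3 l1.vec l0.vec (fun j => t * wvec b1 b2 b3 a b j)
      = t * (-(ε0 * ε1)) := by
    intro t
    rw [det3_expand] at hdet ⊢
    simp only [hv0, hv1, wvec]
    linear_combination (-(ε0 * ε1) * t) * hdet
  have hεor : -(ε0 * ε1) = 1 ∨ -(ε0 * ε1) = -1 := by
    rcases hε0 with rfl | rfl <;> rcases hε1 with rfl | rfl <;> norm_num
  have hεne : -(ε0 * ε1) ≠ 0 := by rcases hεor with h | h <;> rw [h] <;> norm_num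
  -- any projection-equal pair differs by (H1 - H0) times the kernel vector
  have key : ∀ s0 s1 : ℝ, projSl b1 b2 b3 a b (l0.pt s0) = projSl b1 b2 b3 a b (l1.pt s1) →
      ∀ j, l1.pt s1 j - l0.pt s0 j = (H1 - H0) * wvec b1 b2 b3 a b j := by
    intro s0 s1 h j
    have h2 := (proj_eq_iff b1 b2 b3 a b _ _).1 h.symm
    have hd : dot (l1.pt s1) b3 - dot (l0.pt s0) b3 = H1 - H0 := by
      rw [dot_pt l1 s1 b3, dot_pt l0 s0 b3, hv0u, hv1u, ← hH0, ← hH1]; ring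
    have := h2 j
    rwa [hd] at this
  have hw3 : wvec b1 b2 b3 a b 0 * b3 0 + wvec b1 b2 b3 a b 1 * b3 1
      + wvec b1 b2 b3 a b 2 * b3 2 = 1 := by
    rw [dot_expand] at d13 d23 d33
    simp only [wvec]
    linear_combination d33 + a * d13 + b * d23
  have keyne : ∀ s0 s1 : ℝ, projSl b1 b2 b3 a b (l0.pt s0) = projSl b1 b2 b3 a b (l1.pt s1) →
      H1 - H0 ≠ 0 → l0.pt s0 ≠ l1.pt s1 := by
    intro s0 s1 h hne he
    have hk := key s0 s1 h
    apply hne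
    have e : (l1.pt s1 0 - l0.pt s0 0) * b3 0 + (l1.pt s1 1 - l0.pt s0 1) * b3 1
        + (l1.pt s1 2 - l0.pt s0 2) * b3 2 = (H1 - H0) := by
      linear_combination b3 0 * hk 0 + b3 1 * hk 1 + b3 2 * hk 2 + (H1 - H0) * hw3
    rw [he] at e
    simpa using e.symm
  have keyeq : ∀ s0 s1 : ℝ, projSl b1 b2 b3 a b (l0.pt s0) = projSl b1 b2 b3 a b (l1.pt s1) →
      H1 - H0 = 0 → l0.pt s0 = l1.pt s1 := by
    intro s0 s1 h he
    funext j
    have := key s0 s1 h j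
    rw [he, zero_mul] at this
    linarith
  -- the determinant at a crossing
  have keydet : ∀ s0 s1 : ℝ, projSl b1 b2 b3 a b (l0.pt s0) = projSl b1 b2 b3 a b (l1.pt s1) →
      det3 l1.vec l0.vec (l1.pt s1 - l0.pt s0) = (H1 - H0) * (-(ε0 * ε1)) := by
    intro s0 s1 h
    have h2 : (l1.pt s1 - l0.pt s0) = (fun j => (H1 - H0) * wvec b1 b2 b3 a b j) := by
      funext j
      simpa [Pi.sub_apply] using key s0 s1 h j
    rw [h2]
    exact hDw (H1 - H0)
  rcases lt_trichotomy H0 H1 with hlt | heq | hgt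
  · -- H0 < H1 : tau(l1,l0) = 0, tau(l0,l1) decided by the intersection condition
    have t2 : tauSl b1 b2 b3 a b l1.toR l0.toR = 0 := by
      rw [tauSl, if_neg]
      rintro ⟨-, hlt'⟩
      exact absurd hlt' (not_lt.2 hlt.le)
    refine ⟨⟨?_, ?_⟩, ?_⟩
    · intro hS
      rw [t2, add_zero] at hS
      rw [tauSl] at hS
      by_cases hc : (∃ x0 ∈ Set.Icc (0:ℝ) 1, ∃ x1 ∈ Set.Icc (0:ℝ) 1,
          projSl b1 b2 b3 a b ((Seg.toR l0).pt x0) = projSl b1 b2 b3 a b ((Seg.toR l1).pt x1))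
          ∧ dot ((Seg.toR l0).pt 0) b3 < dot ((Seg.toR l1).pt 0) b3
      · obtain ⟨⟨x0, hx0, x1, hx1, hPeq⟩, -⟩ := hc
        refine ⟨x0, hx0, x1, hx1, ?_, hPeq⟩
        exact keyne x0 x1 hPeq (fun h => absurd (by linarith : H0 = H1) hlt.ne)
      · rw [if_neg hc] at hS
        exact absurd rfl hS
    · rintro ⟨s0, hs0, s1, hs1, hne, hPeq⟩
      rw [t2, add_zero, tauSl, if_pos ⟨⟨s0, hs0, s1, hs1, hPeq⟩, hlt⟩]
      show det3 l1.vec l0.vec b3 ≠ 0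
      rw [hD]; exact hεne
    · intro s0 hs0 s1 hs1 hne hPeq
      have hd := keydet s0 s1 hPeq
      have hpos : (0:ℝ) < H1 - H0 := by linarith
      constructor
      · rw [hd]
        exact mul_ne_zero hpos.ne' hεne
      · rw [hd, t2, add_zero, tauSl, if_pos ⟨⟨s0, hs0, s1, hs1, hPeq⟩, hlt⟩]
        show Real.sign ((H1 - H0) * (-(ε0 * ε1))) = det3 l1.vec l0.vec b3
        rw [hD, sign_mul_pm_pos _ _ hεor hpos]
  · -- H0 = H1 : no crossing, both taus vanish
    have t1 : tauSl b1 b2 b3 a b l0.toR l1.toR = 0 := by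
      rw [tauSl, if_neg]
      rintro ⟨-, hlt'⟩
      exact absurd hlt' (not_lt.2 heq.ge)
    have t2 : tauSl b1 b2 b3 a b l1.toR l0.toR = 0 := by
      rw [tauSl, if_neg]
      rintro ⟨-, hlt'⟩
      exact absurd hlt' (not_lt.2 heq.le)
    refine ⟨⟨?_, ?_⟩, ?_⟩
    · intro hS
      rw [t1, t2, add_zero] at hS
      exact absurd rfl hS
    · rintro ⟨s0, hs0, s1, hs1, hne, hPeq⟩
      exact absurd (keyeq s0 s1 hPeq (by linarith)) hne
    · intro s0 hs0 s1 hs1 hne hPeq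
      exact absurd (keyeq s0 s1 hPeq (by linarith)) hne
  · -- H1 < H0 : tau(l0,l1) = 0
    have t1 : tauSl b1 b2 b3 a b l0.toR l1.toR = 0 := by
      rw [tauSl, if_neg]
      rintro ⟨-, hlt'⟩
      exact absurd hlt' (not_lt.2 hgt.le)
    refine ⟨⟨?_, ?_⟩, ?_⟩
    · intro hS
      rw [t1, zero_add] at hS
      rw [tauSl] at hS
      by_cases hc : (∃ x0 ∈ Set.Icc (0:ℝ) 1, ∃ x1 ∈ Set.Icc (0:ℝ) 1,
          projSl b1 b2 b3 a b ((Seg.toR l1).pt x0) = projSl b1 b2 b3 a b ((Seg.toR l0).pt x1))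
          ∧ dot ((Seg.toR l1).pt 0) b3 < dot ((Seg.toR l0).pt 0) b3
      · obtain ⟨⟨x0, hx0, x1, hx1, hPeq⟩, -⟩ := hc
        refine ⟨x1, hx1, x0, hx0, ?_, (hPeq.symm : _)⟩
        exact keyne x1 x0 hPeq.symm (fun h => absurd (by linarith : H0 = H1) hgt.ne')
      · rw [if_neg hc] at hS
        exact absurd rfl hS
    · rintro ⟨s0, hs0, s1, hs1, hne, hPeq⟩
      rw [t1, zero_add, tauSl, if_pos ⟨⟨s1, hs1, s0, hs0, hPeq.symm⟩, hgt⟩]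
      show det3 l0.vec l1.vec b3 ≠ 0
      rw [hD']
      intro h; exact hεne (by linarith)
    · intro s0 hs0 s1 hs1 hne hPeq
      have hd := keydet s0 s1 hPeq
      have hneg : H1 - H0 < 0 := by linarith
      constructor
      · rw [hd]
        exact mul_ne_zero hneg.ne hεne
      · rw [hd, t1, zero_add, tauSl, if_pos ⟨⟨s1, hs1, s0, hs0, hPeq.symm⟩, hgt⟩]
        show Real.sign ((H1 - H0) * (-(ε0 * ε1))) = det3 l0.vec l1.vec b3
        rw [hD', sign_mul_pm_neg _ _ hεor hneg]
        ring
lemma concl_symm (b1 b2 b3 : R3) (a b : ℝ) (l0 l1 : Seg)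
    (h : Concl b1 b2 b3 a b l1 l0) : Concl b1 b2 b3 a b l0 l1 := by
  obtain ⟨h1, h2⟩ := h
  constructor
  · constructor
    · intro hS
      obtain ⟨s0, hs0, s1, hs1, hne, hPeq⟩ := h1.1 (by rwa [add_comm] at hS)
      exact ⟨s1, hs1, s0, hs0, fun e => hne e.symm, hPeq.symm⟩
    · rintro ⟨s0, hs0, s1, hs1, hne, hPeq⟩
      have := h1.2 ⟨s1, hs1, s0, hs0, fun e => hne e.symm, hPeq.symm⟩
      rwa [add_comm] at this
  · intro s0 hs0 s1 hs1 hne hPeq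
    obtain ⟨hd, hs⟩ := h2 s1 hs1 s0 hs0 (fun e => hne e.symm) hPeq.symm
    have flip : det3 l1.vec l0.vec (l1.pt s1 - l0.pt s0)
        = det3 l0.vec l1.vec (l0.pt s0 - l1.pt s1) := by
      rw [det3_expand, det3_expand]
      simp only [Pi.sub_apply]
      ring
    rw [flip]
    exact ⟨hd, hs.trans (add_comm _ _)⟩

/-- Classification of lattice segment directions. -/
lemma seg_classify (l : Seg) : ∃ (i : Fin 3) (δ : ℝ), (δ = 1 ∨ δ = -1) ∧
    ∀ j, l.vec j = δ * stdR i j := by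
  have h := l.adj
  rw [Fin.sum_univ_three] at h
  have trich :
      ((l.b 0 - l.a 0 = 1 ∨ l.b 0 - l.a 0 = -1) ∧ l.a 1 = l.b 1 ∧ l.a 2 = l.b 2) ∨
      (l.a 0 = l.b 0 ∧ (l.b 1 - l.a 1 = 1 ∨ l.b 1 - l.a 1 = -1) ∧ l.a 2 = l.b 2) ∨
      (l.a 0 = l.b 0 ∧ l.a 1 = l.b 1 ∧ (l.b 2 - l.a 2 = 1 ∨ l.b 2 - l.a 2 = -1)) := by
    rcases abs_cases (l.a 0 - l.b 0) with ⟨e0, f0⟩ | ⟨e0, f0⟩ <;>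
      rcases abs_cases (l.a 1 - l.b 1) with ⟨e1, f1⟩ | ⟨e1, f1⟩ <;>
      rcases abs_cases (l.a 2 - l.b 2) with ⟨e2, f2⟩ | ⟨e2, f2⟩ <;>
      rw [e0, e1, e2] at h <;> omega
  have build : ∀ i : Fin 3, (∀ j, j ≠ i → l.a j = l.b j) →
      (l.b i - l.a i = 1 ∨ l.b i - l.a i = -1) →
      ∃ (i : Fin 3) (δ : ℝ), (δ = 1 ∨ δ = -1) ∧ ∀ j, l.vec j = δ * stdR i j := by
    intro i hoff hon
    refine ⟨i, ((l.b i : ℤ) - l.a i : ℤ), ?_, ?_⟩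
    · rcases hon with h' | h'
      · left; rw [h']; norm_num
      · right; rw [h']; norm_num
    · intro j
      by_cases hj : j = i
      · subst hj
        simp [Seg.vec, stdR]
      · have := hoff j hj
        simp [Seg.vec, stdR, hj, this]
  rcases trich with ⟨h1, h2, h3⟩ | ⟨h1, h2, h3⟩ | ⟨h1, h2, h3⟩
  · refine build 0 (fun j hj => ?_) h1
    fin_cases j <;> simp_all
  · refine build 1 (fun j hj => ?_) h2
    fin_cases j <;> simp_all
  · refine build 2 (fun j hj => ?_) h3
    fin_cases j <;> simp_all
theorem statement6 (b1 b2 b3 : R3) (hβ : IsLatticeBasis b1 b2 b3)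
    (R : Finset (Fin 3 → ℤ)) (N : ℝ)
    (hN : ∀ p ∈ R, ∀ q ∈ R, |dot (cubeCenter p) b3 - dot (cubeCenter q) b3| ≤ N)
    (a b : ℝ) (ha0 : a ≠ 0) (ha : |a| < 1/N) (hb0 : b ≠ 0) (hb : |b| < 1/N)
    (l0 l1 : Seg) (h0 : l0.inRegion R) (h1 : l1.inRegion R) :
    (tauSl b1 b2 b3 a b l0.toR l1.toR + tauSl b1 b2 b3 a b l1.toR l0.toR ≠ 0 ↔
      ∃ s0 ∈ Set.Icc (0:ℝ) 1, ∃ s1 ∈ Set.Icc (0:ℝ) 1,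
        l0.pt s0 ≠ l1.pt s1 ∧
        projSl b1 b2 b3 a b (l0.pt s0) = projSl b1 b2 b3 a b (l1.pt s1)) ∧
    (∀ s0 ∈ Set.Icc (0:ℝ) 1, ∀ s1 ∈ Set.Icc (0:ℝ) 1,
        l0.pt s0 ≠ l1.pt s1 →
        projSl b1 b2 b3 a b (l0.pt s0) = projSl b1 b2 b3 a b (l1.pt s1) →
        det3 l1.vec l0.vec (l1.pt s1 - l0.pt s0) ≠ 0 ∧
        Real.sign (det3 l1.vec l0.vec (l1.pt s1 - l0.pt s0))
          = tauSl b1 b2 b3 a b l0.toR l1.toR + tauSl b1 b2 b3 a b l1.toR l0.toR) := by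
  show Concl b1 b2 b3 a b l0 l1
  obtain ⟨hb1, hb2, hb3, hdet⟩ := hβ
  have rep : ∀ u : R3, u ∈ PhiR →
      ∃ (i : Fin 3) (σ : ℝ), (σ = 1 ∨ σ = -1) ∧ ∀ j, u j = σ * stdR i j := by
    rintro u ⟨i, h | h⟩
    · exact ⟨i, 1, Or.inl rfl, fun j => by rw [h]; ring⟩
    · exact ⟨i, -1, Or.inr rfl, fun j => by rw [h]; simp only [Pi.neg_apply]; ring⟩
  obtain ⟨i1, σ1, hσ1, hB1⟩ := rep b1 hb1
  obtain ⟨i2, σ2, hσ2, hB2⟩ := rep b2 hb2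
  obtain ⟨i3, σ3, hσ3, hB3⟩ := rep b3 hb3
  clear rep hb1 hb2 hb3
  -- positivity of N and the product bounds
  have hN0 : 0 < N := by
    rcases lt_or_ge 0 N with h | h
    · exact h
    · exfalso
      have h1 : 1 / N ≤ 0 := one_div_nonpos.2 h
      linarith [abs_nonneg a, ha]
  have haN : |a| * N < 1 := by
    rw [lt_div_iff₀ hN0] at ha; linarith [ha]
  have hbN : |b| * N < 1 := by
    rw [lt_div_iff₀ hN0] at hb; linarith [hb]
  -- the axes of the basis vectors are pairwise distinct
  have hne12 : i1 ≠ i2 := by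
    intro h; subst h
    have h0' : det3 b1 b2 b3 = 0 := by
      rw [det3_expand]; simp only [hB1, hB2, hB3]; ring
    rw [hdet] at h0'
    exact one_ne_zero h0'
  have hne13 : i1 ≠ i3 := by
    intro h; subst h
    have h0' : det3 b1 b2 b3 = 0 := by
      rw [det3_expand]; simp only [hB1, hB2, hB3]; ring
    rw [hdet] at h0'
    exact one_ne_zero h0'
  have hne23 : i2 ≠ i3 := by
    intro h; subst h
    have h0' : det3 b1 b2 b3 = 0 := by
      rw [det3_expand]; simp only [hB1, hB2, hB3]; ring
    rw [hdet] at h0'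
    exact one_ne_zero h0'
  -- orthonormality
  have dd : ∀ (u v : R3) (i j : Fin 3) (σ τ : ℝ),
      (∀ k, u k = σ * stdR i k) → (∀ k, v k = τ * stdR j k) →
      dot u v = σ * τ * (if i = j then 1 else 0) := by
    intro u v i j σ τ hu hv
    have hs := stdR_dot i j
    rw [dot_expand] at hs ⊢
    rw [hu 0, hu 1, hu 2, hv 0, hv 1, hv 2]
    linear_combination (σ * τ) * hs
  have sq : ∀ σ : ℝ, (σ = 1 ∨ σ = -1) → σ * σ = 1 := by
    rintro σ (rfl | rfl) <;> norm_num
  have d11 : dot b1 b1 = 1 := by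
    rw [dd b1 b1 i1 i1 σ1 σ1 hB1 hB1, if_pos rfl, mul_one]; exact sq σ1 hσ1
  have d22 : dot b2 b2 = 1 := by
    rw [dd b2 b2 i2 i2 σ2 σ2 hB2 hB2, if_pos rfl, mul_one]; exact sq σ2 hσ2
  have d33 : dot b3 b3 = 1 := by
    rw [dd b3 b3 i3 i3 σ3 σ3 hB3 hB3, if_pos rfl, mul_one]; exact sq σ3 hσ3
  have d12 : dot b1 b2 = 0 := by
    rw [dd b1 b2 i1 i2 σ1 σ2 hB1 hB2, if_neg hne12]; ring
  have d21 : dot b2 b1 = 0 := by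
    rw [dd b2 b1 i2 i1 σ2 σ1 hB2 hB1, if_neg (Ne.symm hne12)]; ring
  have d13 : dot b1 b3 = 0 := by
    rw [dd b1 b3 i1 i3 σ1 σ3 hB1 hB3, if_neg hne13]; ring
  have d31 : dot b3 b1 = 0 := by
    rw [dd b3 b1 i3 i1 σ3 σ1 hB3 hB1, if_neg (Ne.symm hne13)]; ring
  have d23 : dot b2 b3 = 0 := by
    rw [dd b2 b3 i2 i3 σ2 σ3 hB2 hB3, if_neg hne23]; ring
  have d32 : dot b3 b2 = 0 := by
    rw [dd b3 b2 i3 i2 σ3 σ2 hB3 hB2, if_neg (Ne.symm hne23)]; ring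
  -- the b3-height bound along the two segments
  have hpt : ∀ (l : Seg) (s : ℝ), dot (l.pt s) b3 =
      dot (cubeCenter l.a) b3 + s * (dot (cubeCenter l.b) b3 - dot (cubeCenter l.a) b3) := by
    intro l s
    rw [dot_expand, dot_expand, dot_expand]
    simp only [seg_pt_apply, cubeCenter]
    ring
  have hhN : ∀ s0 ∈ Set.Icc (0:ℝ) 1, ∀ s1 ∈ Set.Icc (0:ℝ) 1,
      |dot (l1.pt s1) b3 - dot (l0.pt s0) b3| ≤ N := by
    intro s0 hs0 s1 hs1
    rw [hpt l1 s1, hpt l0 s0]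
    exact convex_bound N _ _ _ _ s0 s1 (hN _ h1.1 _ h0.1) (hN _ h1.1 _ h0.2)
      (hN _ h1.2 _ h0.1) (hN _ h1.2 _ h0.2) hs0 hs1
  -- integrality of basis coordinates of the difference of starting centers
  have hint : ∀ (u : R3) (i : Fin 3) (σ : ℝ), (σ = 1 ∨ σ = -1) →
      (∀ k, u k = σ * stdR i k) →
      ∃ m : ℤ, (m : ℝ) = dot (fun j => l1.pt 0 j - l0.pt 0 j) u := by
    intro u i σ hσ hu
    have e : dot (fun j => l1.pt 0 j - l0.pt 0 j) u = σ * ((l1.a i : ℝ) - (l0.a i : ℝ)) := by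
      rw [dot_expand]
      simp only [seg_pt_apply]
      rw [hu 0, hu 1, hu 2]
      fin_cases i <;> simp [stdR] <;> ring
    rcases hσ with rfl | rfl
    · exact ⟨l1.a i - l0.a i, by rw [e]; push_cast; ring⟩
    · exact ⟨-(l1.a i - l0.a i), by rw [e]; push_cast; ring⟩
  have hint1 : ∃ m : ℤ, (m : ℝ) = dot (fun j => l1.pt 0 j - l0.pt 0 j) b1 :=
    hint b1 i1 σ1 hσ1 hB1
  have hint2 : ∃ m : ℤ, (m : ℝ) = dot (fun j => l1.pt 0 j - l0.pt 0 j) b2 :=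
    hint b2 i2 σ2 hσ2 hB2
  -- the kernel vector's coordinates
  have hwu1 : dot (wvec b1 b2 b3 a b) b1 = a := by
    rw [dot_expand] at d31 d11 d21 ⊢
    simp only [wvec]
    linear_combination d31 + a * d11 + b * d21
  have hwu2 : dot (wvec b1 b2 b3 a b) b2 = b := by
    rw [dot_expand] at d32 d12 d22 ⊢
    simp only [wvec]
    linear_combination d32 + a * d12 + b * d22
  -- classification of the segment directions with respect to the basis
  have cls : ∀ l : Seg,
      (∃ ε : ℝ, (ε = 1 ∨ ε = -1) ∧ ∀ j, l.vec j = ε * b1 j) ∨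
      (∃ ε : ℝ, (ε = 1 ∨ ε = -1) ∧ ∀ j, l.vec j = ε * b2 j) ∨
      (∃ ε : ℝ, (ε = 1 ∨ ε = -1) ∧ ∀ j, l.vec j = ε * b3 j) := by
    intro l
    obtain ⟨i, δ, hδ, hv⟩ := seg_classify l
    have conv : ∀ (u : R3) (iu : Fin 3) (σ : ℝ), (σ = 1 ∨ σ = -1) →
        (∀ k, u k = σ * stdR iu k) → i = iu →
        ∃ ε : ℝ, (ε = 1 ∨ ε = -1) ∧ ∀ j, l.vec j = ε * u j := by
      intro u iu σ hσ hu hi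
      subst hi
      refine ⟨δ * σ, ?_, ?_⟩
      · rcases hδ with rfl | rfl <;> rcases hσ with rfl | rfl <;> norm_num
      · intro j
        rw [hv j, hu j]
        linear_combination (-(δ * stdR i j)) * (sq σ hσ)
    rcases stdR_cover i1 i2 i3 i hne12 hne13 hne23 with h | h | h
    · exact Or.inl (conv b1 i1 σ1 hσ1 hB1 h)
    · exact Or.inr (Or.inl (conv b2 i2 σ2 hσ2 hB2 h))
    · exact Or.inr (Or.inr (conv b3 i3 σ3 hσ3 hB3 h))
  -- dot of a segment direction with a basis vector
  have dv : ∀ (l : Seg) (ε : ℝ) (u v : R3), (∀ j, l.vec j = ε * u j) → dot u v = 0 →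
      dot l.vec v = 0 := by
    intro l ε u v hv huv
    rw [dot_expand] at huv ⊢
    rw [hv 0, hv 1, hv 2]
    linear_combination ε * huv
  -- the nine cases
  rcases cls l0 with ⟨ε0, hε0, hv0⟩ | ⟨ε0, hε0, hv0⟩ | ⟨ε0, hε0, hv0⟩ <;>
    rcases cls l1 with ⟨ε1, hε1, hv1⟩ | ⟨ε1, hε1, hv1⟩ | ⟨ε1, hε1, hv1⟩
  · -- (b1, b1) : degenerate, use b2-coordinate
    exact deg_case b1 b2 b3 a b b N hN0 hb0 hbN l0 l1 b2
      (dv l0 ε0 b1 b2 hv0 d12) (dv l1 ε1 b1 b2 hv1 d12) hwu2 hint2 hhN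
      (by rw [det3_expand]; simp only [hv0, hv1]; ring)
  · -- (b1, b2) : main case
    exact main_case b1 b2 b3 a b d13 d23 d33 hdet l0 l1 ε0 ε1 hε0 hε1 hv0 hv1
  · -- (b1, b3) : degenerate, use b2-coordinate
    exact deg_case b1 b2 b3 a b b N hN0 hb0 hbN l0 l1 b2
      (dv l0 ε0 b1 b2 hv0 d12) (dv l1 ε1 b3 b2 hv1 d32) hwu2 hint2 hhN
      (by rw [det3_expand]; simp only [hv0, hv1]; ring)
  · -- (b2, b1) : main case, via symmetry
    exact concl_symm b1 b2 b3 a b l0 l1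
      (main_case b1 b2 b3 a b d13 d23 d33 hdet l1 l0 ε1 ε0 hε1 hε0 hv1 hv0)
  · -- (b2, b2) : degenerate, use b1-coordinate
    exact deg_case b1 b2 b3 a b a N hN0 ha0 haN l0 l1 b1
      (dv l0 ε0 b2 b1 hv0 d21) (dv l1 ε1 b2 b1 hv1 d21) hwu1 hint1 hhN
      (by rw [det3_expand]; simp only [hv0, hv1]; ring)
  · -- (b2, b3) : degenerate, use b1-coordinate
    exact deg_case b1 b2 b3 a b a N hN0 ha0 haN l0 l1 b1
      (dv l0 ε0 b2 b1 hv0 d21) (dv l1 ε1 b3 b1 hv1 d31) hwu1 hint1 hhN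
      (by rw [det3_expand]; simp only [hv0, hv1]; ring)
  · -- (b3, b1) : degenerate, use b2-coordinate
    exact deg_case b1 b2 b3 a b b N hN0 hb0 hbN l0 l1 b2
      (dv l0 ε0 b3 b2 hv0 d32) (dv l1 ε1 b1 b2 hv1 d12) hwu2 hint2 hhN
      (by rw [det3_expand]; simp only [hv0, hv1]; ring)
  · -- (b3, b2) : degenerate, use b1-coordinate
    exact deg_case b1 b2 b3 a b a N hN0 ha0 haN l0 l1 b1
      (dv l0 ε0 b3 b1 hv0 d31) (dv l1 ε1 b2 b1 hv1 d21) hwu1 hint1 hhN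
      (by rw [det3_expand]; simp only [hv0, hv1]; ring)
  · -- (b3, b3) : degenerate, use b1-coordinate
    exact deg_case b1 b2 b3 a b a N hN0 ha0 haN l0 l1 b1
      (dv l0 ε0 b3 b1 hv0 d31) (dv l1 ε1 b3 b1 hv1 d31) hwu1 hint1 hhN
      (by rw [det3_expand]; simp only [hv0, hv1]; ring)
end
end
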